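/- arXiv:1905.01443 — 2 statements merged into one kernel-verified Lean document; each statement's English description precedes it below -/
import Mathlib

section
/- For real numbers β, S with S ≥ 3 and S < β ≤ S + 1, natural numbers n ≥ 1, I with 0 ≤ I ≤ n², and γ ≥ 1, the quantity ((β + 1 − S)·I + S·n²) / (2n² + γ(β − 1)) is at most (β + 1)/2, which is at most S/2 + 1. -/
/-- Type II PoA upper bound when `S < β ≤ S + 1`, `S ≥ 3`. -/
theorem typeII_poa_upper (β S γ : ℝ) (hS : 3 ≤ S) (hSβ : S < β) (hβS : β ≤ S + 1)
    (hγ : 1 ≤ γ) (n I : ℕ) (hn : 1 ≤ n) (hI : I ≤ n ^ 2) :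
    ((β + 1 - S) * (I : ℝ) + S * (n : ℝ) ^ 2) / (2 * (n : ℝ) ^ 2 + γ * (β - 1)) ≤
        (β + 1) / 2 ∧
      (β + 1) / 2 ≤ S / 2 + 1 := by
  have hn2 : (1 : ℝ) ≤ (n : ℝ) ^ 2 := by
    have : (1 : ℝ) ≤ (n : ℝ) := by exact_mod_cast hn
    nlinarith
  have hIr : (I : ℝ) ≤ (n : ℝ) ^ 2 := by exact_mod_cast hI
  have hIpos : (0 : ℝ) ≤ (I : ℝ) := Nat.cast_nonneg _
  have hden : 0 < 2 * (n : ℝ) ^ 2 + γ * (β - 1) := by nlinarith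
  constructor
  · rw [div_le_div_iff₀ hden (by norm_num)]
    nlinarith [mul_nonneg (mul_nonneg (by linarith : (0:ℝ) ≤ β + 1) (by linarith : (0:ℝ) ≤ γ)) (by linarith : (0:ℝ) ≤ β - 1), mul_nonneg (by linarith : (0:ℝ) ≤ β + 1 - S) (by linarith : (0:ℝ) ≤ (n:ℝ)^2 - I)]
  · linarith
end

section
/- Let G_1 be a graph on n vertices with minimum dominating set size γ. In the Type II game with 1 < β ≤ 2, the minimum possible social cost 2n² + (β−1)·|I| over all interconnection sets I whose neighborhoods in G_1 dominate G_1 is exactly 2n² + γ(β − 1), attained when the connected vertices form a minimum dominating set. -/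
open SimpleGraph

/-- `D` is a dominating set of `G`. -/
def IsDomSet {V : Type*} (G : SimpleGraph V) (D : Finset V) : Prop :=
  ∀ w : V, w ∉ D → ∃ u ∈ D, G.Adj u w

/-- The domination number of `G`. -/
noncomputable def domNumber (V : Type*) [Fintype V] (G : SimpleGraph V) : ℕ :=
  sInf {k : ℕ | ∃ D : Finset V, IsDomSet G D ∧ D.card = k}

/-- Type II game with `1 < β ≤ 2`: the minimum of `2n² + (β − 1)|D|` over
dominating sets `D` of `G₁` is exactly `2n² + γ(β − 1)`. -/
theorem typeII_social_optimum {V : Type*} [Fintype V] [DecidableEq V]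
    (G : SimpleGraph V) (n : ℕ) (hn : Fintype.card V = n) (β : ℝ)
    (hβ : 1 < β) (hβ2 : β ≤ 2) :
    IsLeast {x : ℝ | ∃ D : Finset V, IsDomSet G D ∧
        x = 2 * (n : ℝ) ^ 2 + (β - 1) * D.card}
      (2 * (n : ℝ) ^ 2 + (domNumber V G : ℝ) * (β - 1)) := by
  have hne : {k : ℕ | ∃ D : Finset V, IsDomSet G D ∧ D.card = k}.Nonempty := by
    exact ⟨(Finset.univ : Finset V).card, Finset.univ, fun w hw => absurd (Finset.mem_univ w) hw, rfl⟩
  obtain ⟨D, hD, hcard⟩ := Nat.sInf_mem hne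
  constructor
  · exact ⟨D, hD, by rw [domNumber, hcard]; ring⟩
  · rintro x ⟨E, hE, rfl⟩
    have h1 : domNumber V G ≤ E.card := Nat.sInf_le ⟨E, hE, rfl⟩
    have h2 : (domNumber V G : ℝ) ≤ E.card := by exact_mod_cast h1
    nlinarith
end
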